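/- Δ_dec is a morphism of algebras for the balanced quasi-shuffle product: Δ_dec(u ∗_b v) = Δ_dec(u) (∗_b ⊗ ∗_b) Δ_dec(v) for all u, v ∈ ℚ⟨B⟩, i.e., (ℚ⟨B⟩, ∗_b, Δ_dec) is a bialgebra. -/

import Mathlib

open TensorProduct

/-- `ℚ⟨B⟩`, modeled as finitely supported functions on words over `ℕ`. -/
abbrev QB : Type := List ℕ →₀ ℚ

/-- The balanced quasi-shuffle product of two words. -/
noncomputable def bqs : List ℕ → List ℕ → QB
  | [], w => Finsupp.single w 1
  | u@(_ :: _), [] => Finsupp.single u 1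
  | i :: u, j :: v =>
      (bqs u (j :: v)).mapDomain (i :: ·) + (bqs (i :: u) v).mapDomain (j :: ·) +
        (if 1 ≤ i ∧ 1 ≤ j then (bqs u v).mapDomain ((i + j) :: ·) else 0)
  termination_by u v => u.length + v.length

/-- The linear extension of the deconcatenation coproduct to `ℚ⟨B⟩`:
`Δ_dec(w) = ∑_{w = w₁w₂} w₁ ⊗ w₂`, extended linearly. -/
noncomputable def deltaDecL : QB →ₗ[ℚ] QB ⊗[ℚ] QB :=
  Finsupp.lsum ℚ fun w => LinearMap.toSpanSingleton ℚ _
    (∑ i ∈ Finset.range (w.length + 1),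
      Finsupp.single (w.take i) (1 : ℚ) ⊗ₜ[ℚ] Finsupp.single (w.drop i) (1 : ℚ))

lemma bqs_nil_left (v : List ℕ) : bqs [] v = Finsupp.single v 1 := by simp [bqs]

lemma bqs_nil_right (u : List ℕ) : bqs u [] = Finsupp.single u 1 := by
  cases u <;> simp [bqs]

lemma bqs_cons (a b : ℕ) (u v : List ℕ) :
    bqs (a :: u) (b :: v) =
      (bqs u (b :: v)).mapDomain (a :: ·) + (bqs (a :: u) v).mapDomain (b :: ·) +
        (if 1 ≤ a ∧ 1 ≤ b then (bqs u v).mapDomain ((a + b) :: ·) else 0) := by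
  rw [bqs]

lemma deltaDecL_single (w : List ℕ) :
    deltaDecL (Finsupp.single w 1) =
      ∑ i ∈ Finset.range (w.length + 1),
        Finsupp.single (w.take i) (1 : ℚ) ⊗ₜ[ℚ] Finsupp.single (w.drop i) (1 : ℚ) := by
  simp [deltaDecL]

noncomputable def mD (a : ℕ) : QB →ₗ[ℚ] QB := Finsupp.lmapDomain ℚ ℚ (a :: ·)

lemma lemA_single (a : ℕ) (w : List ℕ) :
    deltaDecL (Finsupp.single (a :: w) (1:ℚ)) =
      Finsupp.single ([] : List ℕ) (1:ℚ) ⊗ₜ[ℚ] Finsupp.single (a :: w) (1:ℚ) +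
      LinearMap.rTensor QB (mD a) (deltaDecL (Finsupp.single w 1)) := by
  rw [deltaDecL_single, deltaDecL_single, map_sum]
  rw [List.length_cons, Finset.sum_range_succ']
  simp only [List.take_succ_cons, List.drop_succ_cons, List.take_zero, List.drop_zero,
    LinearMap.rTensor_tmul, mD, Finsupp.lmapDomain_apply, Finsupp.mapDomain_single]
  exact add_comm _ _

lemma lemA (a : ℕ) (x : QB) :
    deltaDecL (x.mapDomain (a :: ·)) =
      Finsupp.single ([] : List ℕ) (1:ℚ) ⊗ₜ[ℚ] x.mapDomain (a :: ·) +
      LinearMap.rTensor QB (mD a) (deltaDecL x) := by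
  induction x using Finsupp.induction_linear with
  | zero => simp
  | add f g hf hg =>
      simp only [Finsupp.mapDomain_add, map_add, hf, hg, TensorProduct.tmul_add]
      module
  | single w r =>
      have h1 : (Finsupp.single w r : QB) = r • Finsupp.single w 1 := by
        rw [Finsupp.smul_single' r w 1, mul_one]
      have h2 : Finsupp.mapDomain (fun x => a :: x) (Finsupp.single w (1:ℚ)) =
          Finsupp.single (a :: w) (1:ℚ) := Finsupp.mapDomain_single
      rw [h1, Finsupp.mapDomain_smul, map_smul, map_smul, map_smul, h2, lemA_single,
        smul_add, TensorProduct.tmul_smul]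

set_option maxHeartbeats 2000000 in
theorem key : ∀ (u v : List ℕ),
    deltaDecL (bqs u v) =
      ∑ i ∈ Finset.range (u.length + 1), ∑ j ∈ Finset.range (v.length + 1),
        (bqs (u.take i) (v.take j)) ⊗ₜ[ℚ] (bqs (u.drop i) (v.drop j))
  | [], v => by
      rw [bqs_nil_left, deltaDecL_single]
      simp [bqs_nil_left]
  | a :: u, [] => by
      rw [bqs_nil_right, deltaDecL_single]
      simp [bqs_nil_right]
  | a :: u, b :: v => by
      have IH1 := key u (b :: v)
      have IH2 := key (a :: u) v
      have IH3 := key u v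
      by_cases hc : 1 ≤ a ∧ 1 ≤ b
      · rw [bqs_cons, if_pos hc, map_add, map_add, lemA, lemA, lemA, IH1, IH2, IH3]
        simp only [bqs_cons, if_pos hc, List.length_cons, Finset.sum_range_succ',
          List.take_succ_cons, List.drop_succ_cons, List.take_zero, List.drop_zero,
          bqs_nil_left, bqs_nil_right, map_sum, map_add, LinearMap.rTensor_tmul,
          mD, Finsupp.lmapDomain_apply, Finsupp.mapDomain_single,
          TensorProduct.tmul_add, TensorProduct.add_tmul, Finset.sum_add_distrib]
        module
      · rw [bqs_cons, if_neg hc, add_zero, map_add, lemA, lemA, IH1, IH2]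
        simp only [bqs_cons, if_neg hc, add_zero, List.length_cons, Finset.sum_range_succ',
          List.take_succ_cons, List.drop_succ_cons, List.take_zero, List.drop_zero,
          bqs_nil_left, bqs_nil_right, map_sum, map_add, LinearMap.rTensor_tmul,
          mD, Finsupp.lmapDomain_apply, Finsupp.mapDomain_single,
          TensorProduct.tmul_add, TensorProduct.add_tmul, Finset.sum_add_distrib]
        module
  termination_by u v => u.length + v.length

/-- `Δ_dec` is an algebra morphism for the balanced quasi-shuffle product:
`Δ_dec(u ∗_b v) = Δ_dec(u) · Δ_dec(v)`, where the product on `ℚ⟨B⟩ ⊗ ℚ⟨B⟩` is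
componentwise `∗_b`.  (Stated on the word basis; both sides are bilinear.) -/
theorem stmt_10 (u v : List ℕ) :
    deltaDecL (bqs u v) =
      ∑ i ∈ Finset.range (u.length + 1), ∑ j ∈ Finset.range (v.length + 1),
        (bqs (u.take i) (v.take j)) ⊗ₜ[ℚ] (bqs (u.drop i) (v.drop j)) := by
  exact key u v
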